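/- arXiv:2502.05096 — 3 statements merged into one kernel-verified Lean document; each statement's English description precedes it below -/
import Mathlib

section
/- Let (C, C₋, C₊) be a Reedy category, (α, θ) : ([m], X) → ([n], Y) a morphism in ∫N^{-,+}(C), and β : [m] → [n] a morphism in Δ with α ≤ β pointwise. Then the following are equivalent: (1) there exists a morphism (β, φ) : ([m], X) → ([n], Y) in ∫N^{-,+}(C) with (α, θ) ≤ (β, φ); (2) for each 0 ≤ i ≤ m, the composite Y(α(i) ≤ β(i)) ∘ θ_i : X(i) → Y(β(i)) lies in C₊. Moreover, when these conditions hold, the morphism (β, φ) in (1) is unique, and its components are φ_i = Y(α(i) ≤ β(i)) ∘ θ_i. -/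
namespace ReedyPaper

open CategoryTheory

universe v₂ u₂ v₁ u₁ v u

variable {C : Type u} [Category.{v} C]

def IsIdMor {x y : C} (f : x ⟶ y) : Prop := ∃ h : x = y, f = eqToHom h

structure ReedyStruct (C : Type u) [Category.{v} C] where
  neg : MorphismProperty C
  pos : MorphismProperty C
  neg_id : ∀ x : C, neg (𝟙 x)
  pos_id : ∀ x : C, pos (𝟙 x)
  neg_comp : ∀ {x y z : C} (f : x ⟶ y) (g : y ⟶ z), neg f → neg g → neg (f ≫ g)
  pos_comp : ∀ {x y z : C} (f : x ⟶ y) (g : y ⟶ z), pos f → pos g → pos (f ≫ g)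
  factor_existsUnique : ∀ {x y : C} (f : x ⟶ y),
    ∃! t : Σ z : C, (x ⟶ z) × (z ⟶ y), neg t.2.1 ∧ pos t.2.2 ∧ t.2.1 ≫ t.2.2 = f
  wf : WellFounded (fun x y : C =>
    (∃ f : x ⟶ y, pos f ∧ ¬ IsIdMor f) ∨ (∃ f : y ⟶ x, neg f ∧ ¬ IsIdMor f))

structure ChainObj (C : Type u) [Category.{v} C] where
  n : ℕ
  X : Fin (n + 1) ⥤ C

structure ChainHom (P Q : ChainObj C) where
  α : Fin (P.n + 1) →o Fin (Q.n + 1)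
  θ : ∀ i : Fin (P.n + 1), P.X.obj i ⟶ Q.X.obj (α i)
  natural : ∀ {i j : Fin (P.n + 1)} (h : i ≤ j),
    P.X.map (homOfLE h) ≫ θ j = θ i ≫ Q.X.map (homOfLE (α.monotone h))

theorem ChainHom.ext' {P Q : ChainObj C} {f g : ChainHom P Q}
    (hα : f.α = g.α) (hθ : HEq f.θ g.θ) : f = g := by
  cases f; cases g; cases hα; cases hθ; rfl

def ChainHom.id (P : ChainObj C) : ChainHom P P where
  α := OrderHom.id
  θ i := 𝟙 _
  natural h := (Category.comp_id _).trans (Category.id_comp _).symm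

def ChainHom.comp {P Q S : ChainObj C} (f : ChainHom P Q) (g : ChainHom Q S) :
    ChainHom P S where
  α := g.α.comp f.α
  θ i := f.θ i ≫ g.θ (f.α i)
  natural {i j} h := by
    show P.X.map (homOfLE h) ≫ (f.θ j ≫ g.θ (f.α j)) =
      (f.θ i ≫ g.θ (f.α i)) ≫ S.X.map (homOfLE (g.α.monotone (f.α.monotone h)))
    rw [← Category.assoc, f.natural h, Category.assoc, g.natural (f.α.monotone h),
      ← Category.assoc]

instance : Category (ChainObj C) where
  Hom := ChainHom
  id := ChainHom.id
  comp := ChainHom.comp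
  id_comp f := ChainHom.ext' rfl (heq_of_eq (funext fun i => Category.id_comp _))
  comp_id f := ChainHom.ext' rfl (heq_of_eq (funext fun i => Category.comp_id _))
  assoc f g h := ChainHom.ext' rfl (heq_of_eq (funext fun i => Category.assoc _ _ _))

/-- The partial order on the hom-sets of `∫N(C)` (and of `∫N^{-,+}(C)`):
`(α, θ) ≤ (α', θ')` iff `α ≤ α'` pointwise and `θ'ᵢ = Y(α(i) ≤ α'(i)) ∘ θᵢ` for all `i`. -/
def ChainHom.le {P Q : ChainObj C} (f g : ChainHom P Q) : Prop :=
  (∀ i, f.α i ≤ g.α i) ∧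
    ∀ (i : Fin (P.n + 1)) (h : f.α i ≤ g.α i), g.θ i = f.θ i ≫ Q.X.map (homOfLE h)

theorem ChainHom.le_comp_right {P Q S : ChainObj C} {f f' : P ⟶ Q} (g : Q ⟶ S)
    (h : ChainHom.le f f') : ChainHom.le (f ≫ g) (f' ≫ g) := by
  refine ⟨fun i => g.α.monotone (h.1 i), fun i hi => ?_⟩
  show f'.θ i ≫ g.θ (f'.α i) = (f.θ i ≫ g.θ (f.α i)) ≫ S.X.map (homOfLE hi)
  rw [h.2 i (h.1 i), Category.assoc, g.natural (h.1 i), ← Category.assoc]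
  rfl

theorem ChainHom.le_comp_left {P Q S : ChainObj C} (f : P ⟶ Q) {g g' : Q ⟶ S}
    (h : ChainHom.le g g') : ChainHom.le (f ≫ g) (f ≫ g') := by
  refine ⟨fun i => h.1 (f.α i), fun i hi => ?_⟩
  show f.θ i ≫ g'.θ (f.α i) = (f.θ i ≫ g.θ (f.α i)) ≫ S.X.map (homOfLE hi)
  rw [h.2 (f.α i) (h.1 (f.α i)), ← Category.assoc]
  rfl

/-- Objects of `∫N^{-,+}(C)`: chains all of whose morphisms lie in `C₋`. -/
structure NegObj (R : ReedyStruct C) where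
  n : ℕ
  X : Fin (n + 1) ⥤ C
  negMap : ∀ {i j : Fin (n + 1)} (h : i ≤ j), R.neg (X.map (homOfLE h))

variable {R : ReedyStruct C}

/-- The underlying object of `∫N(C)`. -/
def NegObj.chain (P : NegObj R) : ChainObj C := ⟨P.n, P.X⟩

/-- Morphisms of `∫N^{-,+}(C)`: morphisms of `∫N(C)` all of whose components lie in `C₊`. -/
def NegHomT (P Q : NegObj R) : Type v :=
  { f : P.chain ⟶ Q.chain // ∀ i, R.pos (f.θ i) }

def NegHomT.id (P : NegObj R) : NegHomT P P := ⟨𝟙 P.chain, fun _ => R.pos_id _⟩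

def NegHomT.comp {P Q S : NegObj R} (f : NegHomT P Q) (g : NegHomT Q S) : NegHomT P S :=
  ⟨f.1 ≫ g.1, fun i => by
    show R.pos (f.1.θ i ≫ g.1.θ (f.1.α i))
    exact R.pos_comp _ _ (f.2 i) (g.2 _)⟩

theorem NegHomT.id_comp {P Q : NegObj R} (f : NegHomT P Q) : (NegHomT.id P).comp f = f := by
  apply Subtype.ext
  show 𝟙 P.chain ≫ f.1 = f.1
  exact Category.id_comp f.1

theorem NegHomT.comp_id {P Q : NegObj R} (f : NegHomT P Q) : f.comp (NegHomT.id Q) = f := by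
  apply Subtype.ext
  show f.1 ≫ 𝟙 Q.chain = f.1
  exact Category.comp_id f.1

theorem NegHomT.comp_assoc {P Q S T : NegObj R} (f : NegHomT P Q) (g : NegHomT Q S)
    (h : NegHomT S T) : (f.comp g).comp h = f.comp (g.comp h) := by
  apply Subtype.ext
  show (f.1 ≫ g.1) ≫ h.1 = f.1 ≫ (g.1 ≫ h.1)
  exact Category.assoc f.1 g.1 h.1

/-- The category `∫N^{-,+}(C)`. -/
instance : Category (NegObj R) where
  Hom := NegHomT
  id := NegHomT.id
  comp := NegHomT.comp
  id_comp := NegHomT.id_comp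
  comp_id := NegHomT.comp_id
  assoc := NegHomT.comp_assoc

/-- The order on the hom-sets of `∫N^{-,+}(C)`. -/
def NegHom.le {P Q : NegObj R} (f g : P ⟶ Q) : Prop := ChainHom.le f.1 g.1

/-- The equivalence relation `∼` on the hom-sets of `∫N^{-,+}(C)`: the
symmetric-transitive closure of `≤`. -/
def NegHom.equiv {P Q : NegObj R} (f g : P ⟶ Q) : Prop :=
  Relation.EqvGen (fun a b : P ⟶ Q => NegHom.le a b) f g

theorem NegHom.le_comp_right {P Q S : NegObj R} {f f' : P ⟶ Q} (g : Q ⟶ S)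
    (h : NegHom.le f f') : NegHom.le (f ≫ g) (f' ≫ g) :=
  ChainHom.le_comp_right g.1 h

theorem NegHom.le_comp_left {P Q S : NegObj R} (f : P ⟶ Q) {g g' : Q ⟶ S}
    (h : NegHom.le g g') : NegHom.le (f ≫ g) (f ≫ g') :=
  ChainHom.le_comp_left f.1 h

/-- Identity-reflectingness of a chain. -/
def NegObj.IdRefl (P : NegObj R) : Prop :=
  ∀ {i j : Fin (P.n + 1)} (h : i ≤ j), IsIdMor (P.X.map (homOfLE h)) → i = j

/-- Objects of `∫N^{--,+}_+(C)`: identity-reflecting chains in `C₋`. -/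
structure StrictObj (R : ReedyStruct C) where
  toNegObj : NegObj R
  idRefl : toNegObj.IdRefl

/-- Morphisms of `∫N^{--,+}_+(C)`: morphisms of `∫N^{-,+}(C)` with `α` injective. -/
def StrictHomT (P Q : StrictObj R) : Type v :=
  { f : P.toNegObj ⟶ Q.toNegObj // Function.Injective f.1.α }

def StrictHomT.id (P : StrictObj R) : StrictHomT P P :=
  ⟨𝟙 P.toNegObj, fun _ _ h => h⟩

def StrictHomT.comp {P Q S : StrictObj R} (f : StrictHomT P Q) (g : StrictHomT Q S) :
    StrictHomT P S :=
  ⟨f.1 ≫ g.1, fun _ _ h => f.2 (g.2 h)⟩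

/-- The category `∫N^{--,+}_+(C)`. -/
instance : Category (StrictObj R) where
  Hom := StrictHomT
  id := StrictHomT.id
  comp := StrictHomT.comp
  id_comp f := Subtype.ext (Category.id_comp f.1)
  comp_id f := Subtype.ext (Category.comp_id f.1)
  assoc f g h := Subtype.ext (Category.assoc f.1 g.1 h.1)

/-- The order on the hom-sets of `∫N^{--,+}_+(C)`. -/
def StrictHom.le {P Q : StrictObj R} (f g : P ⟶ Q) : Prop := NegHom.le f.1 g.1

/-- The equivalence relation `∼` on the hom-sets of `∫N^{--,+}_+(C)`. -/
def StrictHom.equiv {P Q : StrictObj R} (f g : P ⟶ Q) : Prop :=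
  Relation.EqvGen (fun a b : P ⟶ Q => StrictHom.le a b) f g

theorem StrictHom.le_comp_right {P Q S : StrictObj R} {f f' : P ⟶ Q} (g : Q ⟶ S)
    (h : StrictHom.le f f') : StrictHom.le (f ≫ g) (f' ≫ g) :=
  NegHom.le_comp_right g.1 h

theorem StrictHom.le_comp_left {P Q S : StrictObj R} (f : P ⟶ Q) {g g' : Q ⟶ S}
    (h : StrictHom.le g g') : StrictHom.le (f ≫ g) (f ≫ g') :=
  NegHom.le_comp_left f.1 h

/-- Objects of `Down_*(C)`: the same as those of `∫N^{-,+}(C)`. -/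
structure DownStar (R : ReedyStruct C) where
  obj : NegObj R

/-- The category `Down_*(C)`: hom-sets are the quotients of those of `∫N^{-,+}(C)`
by the symmetric-transitive closure of `≤`. -/
instance : Category (DownStar R) where
  Hom P Q := Quot (fun f g : P.obj ⟶ Q.obj => NegHom.le f g)
  id P := Quot.mk _ (𝟙 P.obj)
  comp {P Q S} f g :=
    Quot.lift
      (fun f' => Quot.lift (fun g' => Quot.mk _ (f' ≫ g'))
        (fun _ _ hg => Quot.sound (NegHom.le_comp_left f' hg)) g)
      (fun f₁ f₂ hf => Quot.inductionOn g (fun g' =>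
        Quot.sound (NegHom.le_comp_right g' hf))) f
  id_comp f := Quot.inductionOn f fun f' => congrArg (Quot.mk _) (Category.id_comp f')
  comp_id f := Quot.inductionOn f fun f' => congrArg (Quot.mk _) (Category.comp_id f')
  assoc f g h :=
    Quot.inductionOn f fun f' => Quot.inductionOn g fun g' => Quot.inductionOn h fun h' =>
      congrArg (Quot.mk _) (Category.assoc f' g' h')

/-- Objects of `Down(C)`: the same as those of `∫N^{--,+}_+(C)`. -/
structure Down (R : ReedyStruct C) where
  obj : StrictObj R

/-- The category `Down(C)`: hom-sets are the quotients of those of `∫N^{--,+}_+(C)`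
by the symmetric-transitive closure of `≤`. -/
instance : Category (Down R) where
  Hom P Q := Quot (fun f g : P.obj ⟶ Q.obj => StrictHom.le f g)
  id P := Quot.mk _ (𝟙 P.obj)
  comp {P Q S} f g :=
    Quot.lift
      (fun f' => Quot.lift (fun g' => Quot.mk _ (f' ≫ g'))
        (fun _ _ hg => Quot.sound (StrictHom.le_comp_left f' hg)) g)
      (fun f₁ f₂ hf => Quot.inductionOn g (fun g' =>
        Quot.sound (StrictHom.le_comp_right g' hf))) f
  id_comp f := Quot.inductionOn f fun f' => congrArg (Quot.mk _) (Category.id_comp f')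
  comp_id f := Quot.inductionOn f fun f' => congrArg (Quot.mk _) (Category.comp_id f')
  assoc f g h :=
    Quot.inductionOn f fun f' => Quot.inductionOn g fun g' => Quot.inductionOn h fun h' =>
      congrArg (Quot.mk _) (Category.assoc f' g' h')

/-- The quotient functor `∫N^{-,+}(C) → Down_*(C)`. -/
def qStar (R : ReedyStruct C) : NegObj R ⥤ DownStar R where
  obj P := ⟨P⟩
  map f := Quot.mk _ f
  map_id _ := rfl
  map_comp _ _ := rfl

/-- The inclusion functor `Down(C) → Down_*(C)`. -/
def downInclusion (R : ReedyStruct C) : Down R ⥤ DownStar R where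
  obj P := ⟨P.obj.toNegObj⟩
  map {P Q} f :=
    Quot.lift (fun f' : P.obj ⟶ Q.obj => Quot.mk _ f'.1) (fun _ _ h => Quot.sound h) f
  map_id _ := rfl
  map_comp {P Q S} f g := by
    induction f using Quot.ind
    induction g using Quot.ind
    rfl

/-- The last-component functor `∫N(C) → C`. -/
def lastChain : ChainObj C ⥤ C where
  obj P := P.X.obj (Fin.last P.n)
  map {P Q} f := f.θ (Fin.last P.n) ≫ Q.X.map (homOfLE (Fin.le_last (f.α (Fin.last P.n))))
  map_id P := by
    show 𝟙 (P.X.obj (Fin.last P.n)) ≫ P.X.map (homOfLE (Fin.le_last (Fin.last P.n))) = 𝟙 _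
    rw [Category.id_comp]
    exact P.X.map_id _
  map_comp {P Q S} f g := by
    show (f.θ (Fin.last P.n) ≫ g.θ (f.α (Fin.last P.n))) ≫
        S.X.map (homOfLE (Fin.le_last (g.α (f.α (Fin.last P.n))))) =
      (f.θ (Fin.last P.n) ≫ Q.X.map (homOfLE (Fin.le_last (f.α (Fin.last P.n))))) ≫
        g.θ (Fin.last Q.n) ≫ S.X.map (homOfLE (Fin.le_last (g.α (Fin.last Q.n))))
    rw [Category.assoc, Category.assoc, ← Category.assoc (Q.X.map _),
      g.natural (Fin.le_last (f.α (Fin.last P.n))), Category.assoc, ← Functor.map_comp,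
      homOfLE_comp]

theorem lastChain_eq_of_le {P Q : ChainObj C} {f g : P ⟶ Q} (h : ChainHom.le f g) :
    lastChain.map f = lastChain.map g := by
  show f.θ (Fin.last P.n) ≫ Q.X.map (homOfLE (Fin.le_last (f.α (Fin.last P.n)))) =
    g.θ (Fin.last P.n) ≫ Q.X.map (homOfLE (Fin.le_last (g.α (Fin.last P.n))))
  rw [h.2 (Fin.last P.n) (h.1 (Fin.last P.n)), Category.assoc, ← Functor.map_comp,
    homOfLE_comp]

/-- The forgetful functor `∫N^{-,+}(C) → ∫N(C)`. -/
def negForget (R : ReedyStruct C) : NegObj R ⥤ ChainObj C where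
  obj P := P.chain
  map f := f.1
  map_id _ := rfl
  map_comp _ _ := rfl

/-- The last-component functor `∫N^{-,+}(C) → C`. -/
def lastNeg (R : ReedyStruct C) : NegObj R ⥤ C := negForget R ⋙ lastChain

/-- The forgetful functor `∫N^{--,+}_+(C) → ∫N^{-,+}(C)`. -/
def strictForget (R : ReedyStruct C) : StrictObj R ⥤ NegObj R where
  obj P := P.toNegObj
  map f := f.1
  map_id _ := rfl
  map_comp _ _ := rfl

/-- The last-component functor `∫N^{--,+}_+(C) → C`. -/
def lastStrict (R : ReedyStruct C) : StrictObj R ⥤ C := strictForget R ⋙ lastNeg R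

/-- The last-component functor `Down_*(C) → C`. -/
def lastDownStar (R : ReedyStruct C) : DownStar R ⥤ C where
  obj P := (lastNeg R).obj P.obj
  map {P Q} f :=
    Quot.lift (fun f' : P.obj ⟶ Q.obj => (lastNeg R).map f')
      (fun _ _ h => lastChain_eq_of_le h) f
  map_id P := (lastNeg R).map_id P.obj
  map_comp {P Q S} f g := by
    induction f using Quot.ind
    induction g using Quot.ind
    exact (lastNeg R).map_comp _ _

/-- The last-component functor `Down(C) → C`. -/
def lastDown (R : ReedyStruct C) : Down R ⥤ C where
  obj P := (lastStrict R).obj P.obj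
  map {P Q} f :=
    Quot.lift (fun f' : P.obj ⟶ Q.obj => (lastStrict R).map f')
      (fun _ _ h => lastChain_eq_of_le h) f
  map_id P := (lastStrict R).map_id P.obj
  map_comp {P Q S} f g := by
    induction f using Quot.ind
    induction g using Quot.ind
    exact (lastStrict R).map_comp _ _

/-- The wide subcategory `Γ₋` of `∫N^{-,+}(C)`: morphisms of the form
`(σ, id) : ([m], X ∘ σ) → ([n], X)` with `σ` surjective, i.e. morphisms whose simplicial
component is surjective and all of whose components are identities. -/
def GammaNeg (R : ReedyStruct C) {P Q : NegObj R} (f : P ⟶ Q) : Prop :=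
  Function.Surjective f.1.α ∧ ∀ i, IsIdMor (f.1.θ i)

/-- The wide subcategory `Γ₊` of `∫N^{-,+}(C)`: morphisms `(δ, θ)` with `δ` injective. -/
def GammaPos (R : ReedyStruct C) {P Q : NegObj R} (f : P ⟶ Q) : Prop :=
  Function.Injective f.1.α

/-- Whiskering (precomposition) with `lastF` is bijective on natural transformations
between functors out of `C`. -/
def WhiskerUnique {Γ : Type u₁} [Category.{v₁} Γ] (lastF : Γ ⥤ C) : Prop :=
  ∀ {D : Type u₂} [Category.{v₂} D] (F G : C ⥤ D)
    (ε : lastF ⋙ F ⟶ lastF ⋙ G), ∃! ε' : F ⟶ G, Functor.whiskerLeft lastF ε' = ε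

/-- `lastF : Γ ⥤ C` is a weak 1-localization of `Γ` at the `last`-weak equivalences
(the morphisms sent by `lastF` to identities). -/
def IsWeakLocalizationAtLastWeq {Γ : Type u₁} [Category.{v₁} Γ] (lastF : Γ ⥤ C) : Prop :=
  (∀ {P Q : Γ} (f : P ⟶ Q), IsIdMor (lastF.map f) → IsIso (lastF.map f)) ∧
  (∀ {E : Type u₂} [Category.{v₂} E] (G : Γ ⥤ E),
    (∀ {P Q : Γ} (f : P ⟶ Q), IsIdMor (lastF.map f) → IsIso (G.map f)) →
    ∃ H : C ⥤ E, Nonempty (lastF ⋙ H ≅ G)) ∧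
  (∀ {E : Type u₂} [Category.{v₂} E] (H H' : C ⥤ E) (θ : lastF ⋙ H ≅ lastF ⋙ H'),
    ∃! θ' : H ≅ H', Functor.isoWhiskerLeft lastF θ' = θ)

section Statements

variable (R : ReedyStruct C)

theorem statement3 {P Q : NegObj R} (f : P ⟶ Q)
    (β : Fin (P.n + 1) →o Fin (Q.n + 1)) (hβ : ∀ i, f.1.α i ≤ β i) :
    ((∃ g : P ⟶ Q, g.1.α = β ∧ NegHom.le f g) ↔
      ∀ i, R.pos (f.1.θ i ≫ Q.X.map (homOfLE (hβ i)))) ∧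
    (∀ g g' : P ⟶ Q, g.1.α = β → NegHom.le f g → g'.1.α = β → NegHom.le f g' → g = g') ∧
    (∀ (g : P ⟶ Q) (hg : g.1.α = β), NegHom.le f g →
      ∀ i, g.1.θ i ≫ eqToHom (congrArg Q.X.obj (DFunLike.congr_fun hg i)) =
        f.1.θ i ≫ Q.X.map (homOfLE (hβ i))) := by
  refine ⟨⟨?_, ?_⟩, ?_, ?_⟩
  · rintro ⟨⟨⟨αg, θg, natg⟩, pg⟩, hg, hle⟩ i
    simp only at hg
    subst hg
    have h1 := hle.2 i (hβ i)
    simp only at h1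
    exact h1 ▸ pg i
  · intro hpos
    refine ⟨⟨⟨β, fun i => f.1.θ i ≫ Q.X.map (homOfLE (hβ i)), ?_⟩, hpos⟩, rfl, hβ,
      fun i h => rfl⟩
    intro i j h
    show P.chain.X.map (homOfLE h) ≫ f.1.θ j ≫ Q.chain.X.map (homOfLE (hβ j)) =
      (f.1.θ i ≫ Q.chain.X.map (homOfLE (hβ i))) ≫ Q.chain.X.map (homOfLE (β.monotone h))
    rw [← Category.assoc, f.1.natural h, Category.assoc, Category.assoc]
    exact congrArg _ ((Q.X.map_comp _ _).symm.trans
      ((congrArg Q.X.map (Subsingleton.elim _ _)).trans (Q.X.map_comp _ _)))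
  · rintro ⟨⟨αg, θg, natg⟩, pg⟩ ⟨⟨αg', θg', natg'⟩, pg'⟩ hg hle hg' hle'
    simp only at hg hg'
    subst hg; subst hg'
    apply Subtype.ext
    refine ChainHom.ext' rfl (heq_of_eq (funext fun i => ?_))
    have h1 := hle.2 i (hβ i)
    have h2 := hle'.2 i (hβ i)
    simp only at h1 h2
    show θg i = θg' i
    rw [h1, h2]
  · rintro ⟨⟨αg, θg, natg⟩, pg⟩ hg hle i
    simp only at hg
    subst hg
    have h1 := hle.2 i (hβ i)
    simp only at h1
    show θg i ≫ 𝟙 _ = _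
    rw [Category.comp_id]
    exact h1

end Statements

end ReedyPaper
end

section
/- Let (C, C₋, C₊) be a Reedy category. Then the category Down(C) is direct: the relation on its objects given by P ≺ Q iff there exists a non-identity morphism P → Q is well-founded. -/
namespace ReedyPaper

open CategoryTheory

universe v₂ u₂ v₁ u₁ v u

variable {C : Type u} [Category.{v} C]

variable {R : ReedyStruct C}

section Aux13

/-- The transitive closure of the Reedy relation. -/
def T13 (R : ReedyStruct C) : C → C → Prop :=
  Relation.TransGen (fun x y : C =>
    (∃ f : x ⟶ y, R.pos f ∧ ¬ IsIdMor f) ∨ (∃ f : y ⟶ x, R.neg f ∧ ¬ IsIdMor f))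

theorem T13_wf (R : ReedyStruct C) : WellFounded (T13 R) := R.wf.transGen

theorem Rwf_irrefl (R : ReedyStruct C) (x : C) :
    ¬ ((∃ f : x ⟶ x, R.pos f ∧ ¬ IsIdMor f) ∨ (∃ f : x ⟶ x, R.neg f ∧ ¬ IsIdMor f)) :=
  R.wf.isIrrefl.irrefl x

/-- The strict product order on vectors induced by `T13`. -/
def Svec13 (R : ReedyStruct C) (n : ℕ) : (Fin (n + 1) → C) → (Fin (n + 1) → C) → Prop :=
  fun x y => (∀ i, x i = y i ∨ T13 R (x i) (y i)) ∧ x ≠ y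

theorem Svec13_wf (R : ReedyStruct C) : ∀ n, WellFounded (Svec13 R n) := by
  intro n
  induction n with
  | zero =>
    refine Subrelation.wf (r := InvImage (T13 R) (fun x => x 0)) ?_
      (InvImage.wf _ (T13_wf R))
    intro x y h
    rcases h.1 0 with he | ht
    · exact absurd (funext fun i => by rw [Subsingleton.elim (α := Fin 1) i 0]; exact he) h.2
    · exact ht
  | succ n ih =>
    refine Subrelation.wf
      (r := InvImage (Prod.Lex (T13 R) (Svec13 R n))
        (fun x => (x 0, fun i : Fin (n + 1) => x i.succ))) ?_
      (InvImage.wf _ ((T13_wf R).prod_lex ih))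
    intro x y h
    show Prod.Lex (T13 R) (Svec13 R n)
      (x 0, fun i : Fin (n + 1) => x i.succ) (y 0, fun i : Fin (n + 1) => y i.succ)
    by_cases h0 : x 0 = y 0
    · have htne : (fun i : Fin (n + 1) => x i.succ) ≠ (fun i : Fin (n + 1) => y i.succ) := by
        intro hte
        exact h.2 (funext fun j =>
          Fin.cases (motive := fun j => x j = y j) h0 (fun i => congrFun hte i) j)
      rw [h0]
      exact Prod.Lex.right _ ⟨fun i => h.1 i.succ, htne⟩
    · rcases h.1 0 with he | ht
      · exact absurd he h0
      · exact Prod.Lex.left _ _ ht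

/-- The measure of an object of `Down R`: its length together with its vector of objects. -/
def measure13 {R : ReedyStruct C} (P : Down R) : Σ' n : ℕ, Fin (n + 1) → C :=
  ⟨P.obj.toNegObj.n, fun i => P.obj.toNegObj.X.obj i⟩

theorem fin_mono_inj_id {k : ℕ} (g : Fin (k + 1) →o Fin (k + 1))
    (hinj : Function.Injective g) (i : Fin (k + 1)) : g i = i := by
  have sm : StrictMono g := g.monotone.strictMono_of_injective hinj
  have hsurj : Function.Surjective g := Finite.injective_iff_surjective.mp hinj
  have he : StrictMono.orderIsoOfSurjective g sm hsurj = OrderIso.refl _ :=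
    Subsingleton.elim _ _
  have h2 := congrArg (fun e : Fin (k + 1) ≃o Fin (k + 1) => e i) he
  simpa using h2

theorem quot_eq_eqToHom (R : ReedyStruct C) {P Q : Down R} (h : P = Q)
    (g : P.obj ⟶ Q.obj) (hg : HEq g (StrictHomT.id P.obj)) :
    (Quot.mk _ g : P ⟶ Q) = eqToHom h := by
  subst h
  rw [eq_of_heq hg]
  rfl

theorem measure13_lt (R : ReedyStruct C) (P Q : Down R) (f : P ⟶ Q) (hf : ¬ IsIdMor f) :
    PSigma.Lex Nat.lt (Svec13 R) (measure13 P) (measure13 Q) := by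
  obtain ⟨⟨⟨n₁, X₁, hneg₁⟩, hir₁⟩⟩ := P
  obtain ⟨⟨⟨n₂, X₂, hneg₂⟩, hir₂⟩⟩ := Q
  dsimp only [measure13]
  revert hf
  refine Quot.inductionOn f (fun g => ?_)
  intro hf
  obtain ⟨⟨⟨α, θ, nat⟩, posθ⟩, injα⟩ := g
  have hle : n₁ ≤ n₂ := by
    have hcard := Fintype.card_le_of_injective (α := Fin (n₁ + 1)) (β := Fin (n₂ + 1)) _ injα
    simp only [NegObj.chain, Fintype.card_fin] at hcard
    omega
  rcases lt_or_eq_of_le hle with hlt | heqn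
  · exact PSigma.Lex.left _ _ hlt
  · subst heqn
    have hαid : α = OrderHom.id := OrderHom.ext _ _ (funext fun i =>
      fin_mono_inj_id α injα i)
    subst hαid
    by_cases hall : ∀ i, IsIdMor (θ i)
    · exfalso
      have hobj : ∀ i, X₁.obj i = X₂.obj i := fun i => (hall i).1
      have hX : X₁ = X₂ := by
        refine CategoryTheory.Functor.ext hobj ?_
        intro i j g
        have hij : i ≤ j := leOfHom g
        obtain ⟨hi, ei⟩ := hall i
        obtain ⟨hj, ej⟩ := hall j
        have hnat := nat hij
        rw [ei, ej, comp_eqToHom_iff, Category.assoc] at hnat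
        rw [Subsingleton.elim g (homOfLE hij)]
        exact hnat
      subst hX
      apply hf
      refine ⟨rfl, quot_eq_eqToHom R rfl _ (heq_of_eq ?_)⟩
      apply Subtype.ext
      apply Subtype.ext
      refine ChainHom.ext' rfl (heq_of_eq (funext fun i => ?_))
      obtain ⟨hi, ei⟩ := hall i
      exact ei.trans (eqToHom_refl (X₁.obj i) hi)
    · push_neg at hall
      obtain ⟨i₀, hi₀⟩ := hall
      refine PSigma.Lex.right n₁ ?_
      constructor
      · intro i
        by_cases h : IsIdMor (θ i)
        · exact Or.inl h.1
        · exact Or.inr (Relation.TransGen.single (Or.inl ⟨θ i, posθ i, h⟩))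
      · intro hxy
        have hoeq : X₁.obj i₀ = X₂.obj i₀ := congrFun hxy i₀
        have hb : (∃ f : X₁.obj i₀ ⟶ X₂.obj i₀, R.pos f ∧ ¬ IsIdMor f) ∨
            (∃ f : X₂.obj i₀ ⟶ X₁.obj i₀, R.neg f ∧ ¬ IsIdMor f) :=
          Or.inl ⟨θ i₀, posθ i₀, hi₀⟩
        rw [hoeq] at hb
        exact Rwf_irrefl R _ hb

end Aux13

section Statements

variable (R : ReedyStruct C)

theorem statement13 :
    WellFounded (fun P Q : Down R => ∃ f : P ⟶ Q, ¬ IsIdMor f) := by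
  have lexwf : WellFounded (PSigma.Lex Nat.lt (Svec13 R)) :=
    WellFounded.psigma_lex (Nat.lt_wfRel.wf) (fun n => Svec13_wf R n)
  refine Subrelation.wf ?_ (InvImage.wf (measure13 (R := R)) lexwf)
  intro P Q h
  obtain ⟨f, hf⟩ := h
  exact measure13_lt R P Q f hf

end Statements

end ReedyPaper
end

section
/- Let (C, C₋, C₊) be a Reedy category, D a category, and F : Down_*(C) → D a functor that sends every last-weak equivalence of Down_*(C) to an isomorphism of D. Then there exist a functor F̃ : C → D and a natural isomorphism θ : F̃ ∘ last ≅ F, where last : Down_*(C) → C is the last-component functor. -/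
namespace ReedyPaper

open CategoryTheory

universe v₂ u₂ v₁ u₁ v u

variable {C : Type u} [Category.{v} C]

variable {R : ReedyStruct C}

/-! ### Auxiliary constructions for the proof of Statement 18 -/

section Aux18

open ComposableArrows in
theorem chainHom_ext2 {P Q : ChainObj C} {f g : ChainHom P Q}
    (hα : ∀ i, f.α i = g.α i)
    (hθ : ∀ i, f.θ i ≫ Q.X.map (eqToHom (hα i)) = g.θ i) : f = g := by
  have hα' : f.α = g.α := OrderHom.ext _ _ (funext hα)
  obtain ⟨αf, θf, natf⟩ := f
  obtain ⟨αg, θg, natg⟩ := g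
  dsimp at hα'
  subst hα'
  have hθ' : θf = θg := by
    funext i
    exact ((by simpa using hθ i : θf i = θg i))
  subst hθ'
  rfl

theorem negHom_ext2 {P Q : NegObj R} {f g : P ⟶ Q}
    (hα : ∀ i, f.1.α i = g.1.α i)
    (hθ : ∀ i, f.1.θ i ≫ Q.X.map (eqToHom (hα i)) = g.1.θ i) : f = g :=
  Subtype.ext (chainHom_ext2 hα hθ)

/-- The singleton chain on an object. -/
def single (x : C) : NegObj R where
  n := 0
  X := (Functor.const _).obj x
  negMap _ := R.neg_id x

/-- The 2-chain associated to a morphism of `C₋`. -/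
def two {x z : C} (g : x ⟶ z) (hg : R.neg g) : NegObj R where
  n := 1
  X := ComposableArrows.mk₁ g
  negMap {i j} h :=
    match i, j, h with
    | ⟨0, _⟩, ⟨0, _⟩, _ => R.neg_id x
    | ⟨0, _⟩, ⟨1, _⟩, _ => hg
    | ⟨1, _⟩, ⟨1, _⟩, _ => R.neg_id z
    | ⟨1, _⟩, ⟨0, _⟩, h => absurd h (by simp [Fin.le_def])

/-- The 3-chain associated to a composable pair in `C₋`. -/
def three {x z w : C} (g : x ⟶ z) (g' : z ⟶ w) (hg : R.neg g) (hg' : R.neg g') :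
    NegObj R where
  n := 2
  X := ComposableArrows.mk₂ g g'
  negMap {i j} h :=
    match i, j, h with
    | ⟨0, _⟩, ⟨0, _⟩, _ => R.neg_id x
    | ⟨0, _⟩, ⟨1, _⟩, _ => hg
    | ⟨0, _⟩, ⟨2, _⟩, _ => R.neg_comp _ _ hg hg'
    | ⟨1, _⟩, ⟨1, _⟩, _ => R.neg_id z
    | ⟨1, _⟩, ⟨2, _⟩, _ => hg'
    | ⟨2, _⟩, ⟨2, _⟩, _ => R.neg_id w
    | ⟨1, _⟩, ⟨0, _⟩, h => absurd h (by simp [Fin.le_def])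
    | ⟨2, _⟩, ⟨0, _⟩, h => absurd h (by simp [Fin.le_def])
    | ⟨2, _⟩, ⟨1, _⟩, h => absurd h (by simp [Fin.le_def])

/-- The morphism of singleton chains associated to a morphism of `C₊`. -/
def posSingle {x y : C} (p : x ⟶ y) (hp : R.pos p) :
    (single x : NegObj R) ⟶ single y :=
  ⟨{ α := OrderHom.id
     θ := fun _ => p
     natural := fun {i j} h => by
       have : i = j := Subsingleton.elim (α := Fin 1) i j
       subst this
       show 𝟙 x ≫ p = p ≫ 𝟙 y
       simp }, fun _ => hp⟩

/-- The inclusion of the `i`-th object of a chain. -/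
def incl (P : NegObj R) (i : Fin (P.n + 1)) :
    (single (P.X.obj i) : NegObj R) ⟶ P :=
  ⟨{ α := OrderHom.const _ i
     θ := fun _ => 𝟙 _
     natural := fun {j k} h => by
       have : j = k := Subsingleton.elim (α := Fin 1) j k
       subst this
       show 𝟙 _ ≫ 𝟙 _ = 𝟙 _ ≫ P.X.map (homOfLE le_rfl)
       rw [show homOfLE (le_refl i) = 𝟙 i from rfl, P.X.map_id] }, fun _ => R.pos_id _⟩

end Aux18


section Aux18b

/-- Shorthand for the quotient map on morphisms. -/
def qm {P Q : NegObj R} (f : P ⟶ Q) : (⟨P⟩ : DownStar R) ⟶ ⟨Q⟩ := Quot.mk _ f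

theorem qm_comp {P Q S : NegObj R} (f : P ⟶ Q) (g : Q ⟶ S) :
    qm (f ≫ g) = qm f ≫ qm g := rfl

theorem qm_id (P : NegObj R) : qm (𝟙 P) = 𝟙 (⟨P⟩ : DownStar R) := rfl

theorem comp_α {P Q S : NegObj R} (f : P ⟶ Q) (g : Q ⟶ S) (t : Fin (P.n + 1)) :
    (f ≫ g).1.α t = g.1.α (f.1.α t) := rfl

theorem comp_θ {P Q S : NegObj R} (f : P ⟶ Q) (g : Q ⟶ S) (t : Fin (P.n + 1)) :
    (f ≫ g).1.θ t = f.1.θ t ≫ g.1.θ (f.1.α t) := rfl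

theorem negHom_ext0 {P Q : NegObj R} {f g : P ⟶ Q} (hα : f.1.α = g.1.α)
    (hθ : HEq f.1.θ g.1.θ) : f = g := Subtype.ext (ChainHom.ext' hα hθ)

theorem incl_last_weq (P : NegObj R) :
    IsIdMor ((lastDownStar R).map (qm (incl P (Fin.last P.n)))) := by
  refine ⟨rfl, ?_⟩
  show 𝟙 _ ≫ P.X.map (homOfLE _) = eqToHom rfl
  rw [eqToHom_refl, Category.id_comp, show homOfLE (Fin.le_last (Fin.last P.n)) = 𝟙 _ from rfl,
    P.X.map_id]

/-- The inclusion at position `0` of a 2-chain. -/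
def incl0 {x z : C} (g : x ⟶ z) (hg : R.neg g) :
    (single x : NegObj R) ⟶ two g hg := incl (two g hg) ⟨0, by exact Nat.zero_lt_succ _⟩

/-- The inclusion at position `1` of a 2-chain. -/
def incl1 {x z : C} (g : x ⟶ z) (hg : R.neg g) :
    (single z : NegObj R) ⟶ two g hg := incl (two g hg) ⟨1, by exact Nat.one_lt_two⟩

/-- The morphism of 2-chains induced by a commuting square with positive verticals. -/
def twoHomMk {x x' z z' : C} {g : x ⟶ z} {g' : x' ⟶ z'} (hg : R.neg g) (hg' : R.neg g')
    (h : x ⟶ x') (h' : z ⟶ z') (hh : R.pos h) (hh' : R.pos h')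
    (comm : g ≫ h' = h ≫ g') : (two g hg : NegObj R) ⟶ two g' hg' :=
  ⟨{ α := OrderHom.id
     θ := fun t => match t with
       | ⟨0, _⟩ => h
       | ⟨1, _⟩ => h'
     natural := fun {s t} hst => by
       match s, t, hst with
       | ⟨0, _⟩, ⟨0, _⟩, _ =>
         show 𝟙 _ ≫ h = h ≫ 𝟙 _
         simp
       | ⟨0, _⟩, ⟨1, _⟩, _ =>
         show g ≫ h' = h ≫ g'
         exact comm
       | ⟨1, _⟩, ⟨1, _⟩, _ =>
         show 𝟙 _ ≫ h' = h' ≫ 𝟙 _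
         simp
       | ⟨1, _⟩, ⟨0, _⟩, hst => exact absurd hst (by simp [Fin.le_def]) },
   fun t => match t with
     | ⟨0, _⟩ => hh
     | ⟨1, _⟩ => hh'⟩

/-- The morphism from the 2-chain of `Q.X.map (homOfLE h)` to `Q`. -/
def twoHomOfLE (Q : NegObj R) {i j : Fin (Q.n + 1)} (h : i ≤ j) :
    (two (Q.X.map (homOfLE h)) (Q.negMap h) : NegObj R) ⟶ Q :=
  ⟨{ α := ⟨fun t => match t with
       | ⟨0, _⟩ => i
       | ⟨1, _⟩ => j,
       fun a b hab => by
         match a, b, hab with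
         | ⟨0, _⟩, ⟨0, _⟩, _ => exact le_refl i
         | ⟨0, _⟩, ⟨1, _⟩, _ => exact h
         | ⟨1, _⟩, ⟨1, _⟩, _ => exact le_refl j
         | ⟨1, _⟩, ⟨0, _⟩, hab => exact absurd hab (by simp [Fin.le_def])⟩
     θ := fun t => match t with
       | ⟨0, _⟩ => 𝟙 (Q.X.obj i)
       | ⟨1, _⟩ => 𝟙 (Q.X.obj j)
     natural := fun {s t} hst => by
       match s, t, hst with
       | ⟨0, _⟩, ⟨0, _⟩, _ =>
         show 𝟙 _ ≫ 𝟙 _ = 𝟙 _ ≫ Q.X.map (𝟙 i)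
         rw [Q.X.map_id]
       | ⟨0, _⟩, ⟨1, _⟩, _ =>
         show Q.X.map (homOfLE h) ≫ 𝟙 _ = 𝟙 _ ≫ Q.X.map (homOfLE h)
         simp
       | ⟨1, _⟩, ⟨1, _⟩, _ =>
         show 𝟙 _ ≫ 𝟙 _ = 𝟙 _ ≫ Q.X.map (𝟙 j)
         rw [Q.X.map_id]
       | ⟨1, _⟩, ⟨0, _⟩, hst => exact absurd hst (by simp [Fin.le_def]) },
   fun t => match t with
     | ⟨0, _⟩ => R.pos_id _
     | ⟨1, _⟩ => R.pos_id _⟩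

theorem incl0_twoHomOfLE (Q : NegObj R) {i j : Fin (Q.n + 1)} (h : i ≤ j) :
    incl0 (Q.X.map (homOfLE h)) (Q.negMap h) ≫ twoHomOfLE Q h = incl Q i := by
  refine negHom_ext0 rfl (heq_of_eq (funext fun t => ?_))
  show 𝟙 (Q.X.obj i) ≫ 𝟙 (Q.X.obj i) = 𝟙 (Q.X.obj i)
  simp

theorem incl1_twoHomOfLE (Q : NegObj R) {i j : Fin (Q.n + 1)} (h : i ≤ j) :
    incl1 (Q.X.map (homOfLE h)) (Q.negMap h) ≫ twoHomOfLE Q h = incl Q j := by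
  refine negHom_ext0 rfl (heq_of_eq (funext fun t => ?_))
  show 𝟙 (Q.X.obj j) ≫ 𝟙 (Q.X.obj j) = 𝟙 (Q.X.obj j)
  simp

theorem posSingle_incl0_twoHomMk {x x' z z' : C} {g : x ⟶ z} {g' : x' ⟶ z'}
    (hg : R.neg g) (hg' : R.neg g') (h : x ⟶ x') (h' : z ⟶ z')
    (hh : R.pos h) (hh' : R.pos h') (comm : g ≫ h' = h ≫ g') :
    posSingle h hh ≫ incl0 g' hg' = incl0 g hg ≫ twoHomMk hg hg' h h' hh hh' comm := by
  refine negHom_ext0 rfl (heq_of_eq (funext fun t => ?_))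
  show h ≫ 𝟙 x' = 𝟙 x ≫ h
  simp

theorem posSingle_incl1_twoHomMk {x x' z z' : C} {g : x ⟶ z} {g' : x' ⟶ z'}
    (hg : R.neg g) (hg' : R.neg g') (h : x ⟶ x') (h' : z ⟶ z')
    (hh : R.pos h) (hh' : R.pos h') (comm : g ≫ h' = h ≫ g') :
    posSingle h' hh' ≫ incl1 g' hg' = incl1 g hg ≫ twoHomMk hg hg' h h' hh hh' comm := by
  refine negHom_ext0 rfl (heq_of_eq (funext fun t => ?_))
  show h' ≫ 𝟙 z' = 𝟙 z ≫ h'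
  simp

end Aux18b

section Aux18c

variable {D : Type u₂} [Category.{v₂} D] (F : DownStar R ⥤ D)
  (hF : ∀ {P Q : DownStar R} (f : P ⟶ Q),
    IsIdMor ((lastDownStar R).map f) → IsIso (F.map f))

include hF

theorem isIso_incl1 {x z : C} (g : x ⟶ z) (hg : R.neg g) :
    IsIso (F.map (qm (incl1 g hg))) :=
  hF _ (incl_last_weq (two g hg))

/-- The canonical image in `D` of a morphism of `C₋`. -/
noncomputable def bracket {x z : C} (g : x ⟶ z) (hg : R.neg g) :
    F.obj ⟨single x⟩ ⟶ F.obj ⟨single z⟩ :=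
  letI := isIso_incl1 F hF g hg
  F.map (qm (incl0 g hg)) ≫ inv (F.map (qm (incl1 g hg)))

theorem bracket_comp_incl1 {x z : C} (g : x ⟶ z) (hg : R.neg g) :
    bracket F hF g hg ≫ F.map (qm (incl1 g hg)) = F.map (qm (incl0 g hg)) := by
  letI := isIso_incl1 F hF g hg
  rw [bracket]
  simp

theorem bracket_cancel {x z : C} (g : x ⟶ z) (hg : R.neg g) {Q : NegObj R}
    (w : (two g hg : NegObj R) ⟶ Q) :
    bracket F hF g hg ≫ F.map (qm (incl1 g hg ≫ w)) = F.map (qm (incl0 g hg ≫ w)) := by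
  rw [qm_comp, qm_comp, F.map_comp, F.map_comp, ← Category.assoc, bracket_comp_incl1]

theorem bracket_incl (Q : NegObj R) {i : Fin (Q.n + 1)} (h : i ≤ Fin.last Q.n) :
    bracket F hF (Q.X.map (homOfLE h)) (Q.negMap h) ≫ F.map (qm (incl Q (Fin.last Q.n)))
      = F.map (qm (incl Q i)) := by
  have := bracket_cancel F hF (Q.X.map (homOfLE h)) (Q.negMap h) (twoHomOfLE Q h)
  rwa [incl0_twoHomOfLE, incl1_twoHomOfLE] at this

theorem bracket_id (x : C) : bracket F hF (𝟙 x) (R.neg_id x) = 𝟙 _ := by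
  letI := isIso_incl1 F hF (𝟙 x) (R.neg_id x)
  have h : qm (incl0 (𝟙 x) (R.neg_id x)) = qm (incl1 (𝟙 x) (R.neg_id x)) := by
    refine Quot.sound ⟨fun t => ?_, fun t ht => ?_⟩
    · show (⟨0, _⟩ : Fin 2) ≤ ⟨1, _⟩
      simp [Fin.le_def]
    · show 𝟙 x = 𝟙 x ≫ (ComposableArrows.mk₁ (𝟙 x)).map (homOfLE ht)
      show 𝟙 x = 𝟙 x ≫ 𝟙 x
      simp
  rw [bracket, h]
  simp

theorem bracket_comp {x z w : C} (g : x ⟶ z) (g' : z ⟶ w) (hg : R.neg g) (hg' : R.neg g') :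
    bracket F hF (g ≫ g') (R.neg_comp _ _ hg hg')
      = bracket F hF g hg ≫ bracket F hF g' hg' := by
  set T : NegObj R := three g g' hg hg' with hT
  have h01 : (⟨0, by omega⟩ : Fin 3) ≤ ⟨1, by omega⟩ := by simp [Fin.le_def]
  have h12 : (⟨1, by omega⟩ : Fin 3) ≤ ⟨2, by omega⟩ := by simp [Fin.le_def]
  have h02 : (⟨0, by omega⟩ : Fin 3) ≤ ⟨2, by omega⟩ := by simp [Fin.le_def]
  have c1 : bracket F hF g hg ≫ F.map (qm (incl T ⟨1, by show 1 < 3; omega⟩))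
      = F.map (qm (incl T ⟨0, by show 0 < 3; omega⟩)) := by
    have := bracket_cancel F hF (T.X.map (homOfLE h01)) (T.negMap h01) (twoHomOfLE T h01)
    rwa [incl0_twoHomOfLE T h01, incl1_twoHomOfLE T h01] at this
  have c2 : bracket F hF g' hg' ≫ F.map (qm (incl T ⟨2, by show 2 < 3; omega⟩))
      = F.map (qm (incl T ⟨1, by show 1 < 3; omega⟩)) := by
    have := bracket_cancel F hF (T.X.map (homOfLE h12)) (T.negMap h12) (twoHomOfLE T h12)
    rwa [incl0_twoHomOfLE T h12, incl1_twoHomOfLE T h12] at this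
  have c02 : bracket F hF (g ≫ g') (R.neg_comp _ _ hg hg') ≫ F.map (qm (incl T ⟨2, by show 2 < 3; omega⟩))
      = F.map (qm (incl T ⟨0, by show 0 < 3; omega⟩)) := by
    have := bracket_cancel F hF (T.X.map (homOfLE h02)) (T.negMap h02) (twoHomOfLE T h02)
    rwa [incl0_twoHomOfLE T h02, incl1_twoHomOfLE T h02] at this
  haveI : IsIso (F.map (qm (incl T ⟨2, by show 2 < 3; omega⟩))) := hF _ (incl_last_weq T)
  apply (cancel_mono (F.map (qm (incl T ⟨2, by show 2 < 3; omega⟩)))).1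
  exact c02.trans (c1.symm.trans ((congrArg (bracket F hF g hg ≫ ·) c2.symm).trans
    (Category.assoc _ _ _).symm))

theorem bracket_exchange {x z x' z' : C} {g : x ⟶ z} {g' : x' ⟶ z'}
    (hg : R.neg g) (hg' : R.neg g') (h : x ⟶ x') (h' : z ⟶ z')
    (hh : R.pos h) (hh' : R.pos h') (comm : g ≫ h' = h ≫ g') :
    F.map (qm (posSingle h hh)) ≫ bracket F hF g' hg'
      = bracket F hF g hg ≫ F.map (qm (posSingle h' hh')) := by
  letI := isIso_incl1 F hF g' hg'
  rw [← cancel_mono (F.map (qm (incl1 g' hg')))]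
  have e1 : F.map (qm (posSingle h hh)) ≫ F.map (qm (incl0 g' hg'))
      = F.map (qm (incl0 g hg)) ≫ F.map (qm (twoHomMk hg hg' h h' hh hh' comm)) := by
    rw [← F.map_comp, ← F.map_comp, ← qm_comp, ← qm_comp, posSingle_incl0_twoHomMk]
  have e2 : F.map (qm (posSingle h' hh')) ≫ F.map (qm (incl1 g' hg'))
      = F.map (qm (incl1 g hg)) ≫ F.map (qm (twoHomMk hg hg' h h' hh hh' comm)) := by
    rw [← F.map_comp, ← F.map_comp, ← qm_comp, ← qm_comp, posSingle_incl1_twoHomMk]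
  calc (F.map (qm (posSingle h hh)) ≫ bracket F hF g' hg') ≫ F.map (qm (incl1 g' hg'))
      = F.map (qm (posSingle h hh))
          ≫ (bracket F hF g' hg' ≫ F.map (qm (incl1 g' hg'))) := by rw [Category.assoc]
    _ = F.map (qm (posSingle h hh)) ≫ F.map (qm (incl0 g' hg')) := by rw [bracket_comp_incl1]
    _ = F.map (qm (incl0 g hg)) ≫ F.map (qm (twoHomMk hg hg' h h' hh hh' comm)) := e1
    _ = (bracket F hF g hg ≫ F.map (qm (incl1 g hg)))
          ≫ F.map (qm (twoHomMk hg hg' h h' hh hh' comm)) := by rw [bracket_comp_incl1]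
    _ = bracket F hF g hg
          ≫ (F.map (qm (posSingle h' hh')) ≫ F.map (qm (incl1 g' hg'))) := by
        rw [Category.assoc, ← e2]
    _ = (bracket F hF g hg ≫ F.map (qm (posSingle h' hh')))
          ≫ F.map (qm (incl1 g' hg')) := by rw [Category.assoc]

end Aux18c

section Aux18d

variable (R)

/-- The chosen Reedy factorization of a morphism. -/
noncomputable def fsig {x y : C} (f : x ⟶ y) : Σ z : C, (x ⟶ z) × (z ⟶ y) :=
  (R.factor_existsUnique f).choose

theorem fsig_neg {x y : C} (f : x ⟶ y) : R.neg (fsig R f).2.1 :=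
  (R.factor_existsUnique f).choose_spec.1.1

theorem fsig_pos {x y : C} (f : x ⟶ y) : R.pos (fsig R f).2.2 :=
  (R.factor_existsUnique f).choose_spec.1.2.1

theorem fsig_eq {x y : C} (f : x ⟶ y) : (fsig R f).2.1 ≫ (fsig R f).2.2 = f :=
  (R.factor_existsUnique f).choose_spec.1.2.2

theorem fsig_unique {x y : C} {f : x ⟶ y} {z : C} {g : x ⟶ z} {p : z ⟶ y}
    (hg : R.neg g) (hp : R.pos p) (hc : g ≫ p = f) :
    (⟨z, g, p⟩ : Σ z : C, (x ⟶ z) × (z ⟶ y)) = fsig R f :=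
  (R.factor_existsUnique f).choose_spec.2 _ ⟨hg, hp, hc⟩

variable {R}

theorem posSingle_id (x : C) :
    posSingle (𝟙 x) (R.pos_id x) = 𝟙 (single x : NegObj R) :=
  negHom_ext0 rfl HEq.rfl

theorem posSingle_comp {x y z : C} (p : x ⟶ y) (p' : y ⟶ z) (hp : R.pos p) (hp' : R.pos p') :
    posSingle p hp ≫ posSingle p' hp' = posSingle (p ≫ p') (R.pos_comp _ _ hp hp') :=
  negHom_ext0 rfl HEq.rfl

variable {D : Type u₂} [Category.{v₂} D] (F : DownStar R ⥤ D)
  (hF : ∀ {P Q : DownStar R} (f : P ⟶ Q),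
    IsIdMor ((lastDownStar R).map f) → IsIso (F.map f))

include hF

/-- The image in `D` of a factorization datum. -/
noncomputable def brkt {x y : C} (t : Σ z : C, (x ⟶ z) × (z ⟶ y))
    (ht : R.neg t.2.1 ∧ R.pos t.2.2) : F.obj ⟨single x⟩ ⟶ F.obj ⟨single y⟩ :=
  bracket F hF t.2.1 ht.1 ≫ F.map (qm (posSingle t.2.2 ht.2))

theorem brkt_congr {x y : C} {t t' : Σ z : C, (x ⟶ z) × (z ⟶ y)} (h : t = t')
    (ht : R.neg t.2.1 ∧ R.pos t.2.2) (ht' : R.neg t'.2.1 ∧ R.pos t'.2.2) :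
    brkt F hF t ht = brkt F hF t' ht' := by subst h; rfl

/-- The induced functor `C ⥤ D`. -/
noncomputable def Ft : C ⥤ D where
  obj x := F.obj ⟨single x⟩
  map {x y} f := brkt F hF (fsig R f) ⟨fsig_neg R f, fsig_pos R f⟩
  map_id x := by
    rw [← brkt_congr F hF
      (fsig_unique R (R.neg_id x) (R.pos_id x) (Category.id_comp (𝟙 x)))
      ⟨R.neg_id x, R.pos_id x⟩ ⟨fsig_neg R _, fsig_pos R _⟩]
    show bracket F hF (𝟙 x) (R.neg_id x) ≫ F.map (qm (posSingle (𝟙 x) (R.pos_id x))) = 𝟙 _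
    rw [bracket_id, posSingle_id, qm_id, F.map_id, Category.id_comp]
  map_comp {x y w} f f' := by
    have hcomm : (fsig R ((fsig R f).2.2 ≫ (fsig R f').2.1)).2.1
        ≫ (fsig R ((fsig R f).2.2 ≫ (fsig R f').2.1)).2.2
        = (fsig R f).2.2 ≫ (fsig R f').2.1 := fsig_eq R _
    have hfac : ((fsig R f).2.1 ≫ (fsig R ((fsig R f).2.2 ≫ (fsig R f').2.1)).2.1)
        ≫ ((fsig R ((fsig R f).2.2 ≫ (fsig R f').2.1)).2.2 ≫ (fsig R f').2.2)
        = f ≫ f' := by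
      simp only [Category.assoc]
      rw [← Category.assoc (fsig R ((fsig R f).2.2 ≫ (fsig R f').2.1)).2.1, hcomm]
      simp only [Category.assoc]
      rw [← Category.assoc, fsig_eq, fsig_eq]
    rw [← brkt_congr F hF
      (fsig_unique R
        (R.neg_comp _ _ (fsig_neg R f) (fsig_neg R _))
        (R.pos_comp _ _ (fsig_pos R _) (fsig_pos R f')) hfac)
      ⟨R.neg_comp _ _ (fsig_neg R f) (fsig_neg R _),
       R.pos_comp _ _ (fsig_pos R _) (fsig_pos R f')⟩
      ⟨fsig_neg R _, fsig_pos R _⟩]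
    show bracket F hF _ (R.neg_comp _ _ (fsig_neg R f) (fsig_neg R _))
        ≫ F.map (qm (posSingle _ (R.pos_comp _ _ (fsig_pos R _) (fsig_pos R f'))))
      = (bracket F hF _ (fsig_neg R f) ≫ F.map (qm (posSingle _ (fsig_pos R f))))
        ≫ (bracket F hF _ (fsig_neg R f') ≫ F.map (qm (posSingle _ (fsig_pos R f'))))
    rw [bracket_comp F hF (fsig R f).2.1 (fsig R ((fsig R f).2.2 ≫ (fsig R f').2.1)).2.1
        (fsig_neg R f) (fsig_neg R _),
      ← posSingle_comp (fsig R ((fsig R f).2.2 ≫ (fsig R f').2.1)).2.2 (fsig R f').2.2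
        (fsig_pos R _) (fsig_pos R f'),
      qm_comp, F.map_comp]
    have hex := bracket_exchange F hF (fsig_neg R ((fsig R f).2.2 ≫ (fsig R f').2.1))
      (fsig_neg R f') ((fsig R f).2.2) ((fsig R ((fsig R f).2.2 ≫ (fsig R f').2.1)).2.2)
      (fsig_pos R f) (fsig_pos R _) hcomm
    simp only [Category.assoc]
    rw [reassoc_of% hex]

end Aux18d

section Statements

variable (R : ReedyStruct C)

theorem statement18 {D : Type u₂} [Category.{v₂} D] (F : DownStar R ⥤ D)
    (hF : ∀ {P Q : DownStar R} (f : P ⟶ Q),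
      IsIdMor ((lastDownStar R).map f) → IsIso (F.map f)) :
    ∃ Ft : C ⥤ D, Nonempty (lastDownStar R ⋙ Ft ≅ F) := by
  refine ⟨Ft F hF, ⟨NatIso.ofComponents
    (fun P => @asIso _ _ _ _ (F.map (qm (incl P.obj (Fin.last P.obj.n))))
      (hF _ (incl_last_weq P.obj))) ?_⟩⟩
  intro P Q f
  induction f using Quot.ind with
  | _ fh =>
  show (Ft F hF).map
      (fh.1.θ (Fin.last P.obj.n)
        ≫ Q.obj.X.map (homOfLE (Fin.le_last (fh.1.α (Fin.last P.obj.n)))))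
      ≫ F.map (qm (incl Q.obj (Fin.last Q.obj.n)))
    = F.map (qm (incl P.obj (Fin.last P.obj.n))) ≫ F.map (Quot.mk _ fh)
  have hco : (fsig R (fh.1.θ (Fin.last P.obj.n)
        ≫ Q.obj.X.map (homOfLE (Fin.le_last (fh.1.α (Fin.last P.obj.n)))))).2.1
      ≫ (fsig R (fh.1.θ (Fin.last P.obj.n)
        ≫ Q.obj.X.map (homOfLE (Fin.le_last (fh.1.α (Fin.last P.obj.n)))))).2.2
      = fh.1.θ (Fin.last P.obj.n)
        ≫ Q.obj.X.map (homOfLE (Fin.le_last (fh.1.α (Fin.last P.obj.n)))) :=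
    fsig_eq R _
  have hex := bracket_exchange F hF
    (fsig_neg R (fh.1.θ (Fin.last P.obj.n)
      ≫ Q.obj.X.map (homOfLE (Fin.le_last (fh.1.α (Fin.last P.obj.n))))))
    (Q.obj.negMap (Fin.le_last (fh.1.α (Fin.last P.obj.n))))
    (fh.1.θ (Fin.last P.obj.n))
    ((fsig R (fh.1.θ (Fin.last P.obj.n)
      ≫ Q.obj.X.map (homOfLE (Fin.le_last (fh.1.α (Fin.last P.obj.n)))))).2.2)
    (fh.2 (Fin.last P.obj.n))
    (fsig_pos R _) hco
  have epq : posSingle (fh.1.θ (Fin.last P.obj.n)) (fh.2 (Fin.last P.obj.n))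
      ≫ incl Q.obj (fh.1.α (Fin.last P.obj.n))
      = incl P.obj (Fin.last P.obj.n) ≫ fh := by
    refine negHom_ext0 rfl (heq_of_eq (funext fun t => ?_))
    exact (Category.comp_id _).trans (Category.id_comp _).symm
  have step1 : (Ft F hF).map
      (fh.1.θ (Fin.last P.obj.n)
        ≫ Q.obj.X.map (homOfLE (Fin.le_last (fh.1.α (Fin.last P.obj.n)))))
      = bracket F hF
          (fsig R (fh.1.θ (Fin.last P.obj.n)
            ≫ Q.obj.X.map (homOfLE (Fin.le_last (fh.1.α (Fin.last P.obj.n)))))).2.1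
          (fsig_neg R _)
        ≫ F.map (qm (posSingle
          (fsig R (fh.1.θ (Fin.last P.obj.n)
            ≫ Q.obj.X.map (homOfLE (Fin.le_last (fh.1.α (Fin.last P.obj.n)))))).2.2
          (fsig_pos R _))) := rfl
  rw [step1, ← hex]
  refine (Category.assoc _ _ _).trans ?_
  refine (congrArg (fun k => F.map (qm (posSingle (fh.1.θ (Fin.last P.obj.n))
    (fh.2 (Fin.last P.obj.n)))) ≫ k)
    (bracket_incl F hF Q.obj (Fin.le_last (fh.1.α (Fin.last P.obj.n))))).trans ?_
  exact ((F.map_comp _ _).symm.trans (congrArg (fun k => F.map (qm k)) epq)).trans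
    (F.map_comp _ _)


end Statements

end ReedyPaper
end
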